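/- Let θ_1 > θ_2 > … > θ_I > 0, N_1, …, N_I > 0, S > 0, and for k ∈ {1,…,I} define λ(k) = (∑_{i=1}^k N_i·√θ_i / (S + ∑_{i=1}^k N_i))². If k is such that θ_k > λ(k) and (k = I or θ_{k+1} ≤ λ(k)), then ∑_{i=1}^I N_i·(√(θ_i/λ(k)) − 1)^+ = S; consequently λ(k) is the unique CP water level λ* and #{i : θ_i > λ*} = k. -/

import Mathlib

lemma cp_term_mono {θ a b : ℝ} (hθ : 0 < θ) (ha : 0 < a) (hab : a ≤ b) :
    max (Real.sqrt (θ / b) - 1) 0 ≤ max (Real.sqrt (θ / a) - 1) 0 := by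
  apply max_le_max _ le_rfl
  have hdiv : θ / b ≤ θ / a := by gcongr
  have := Real.sqrt_le_sqrt hdiv
  linarith

lemma cp_term_strict {θ a b : ℝ} (ha : 0 < a) (hab : a < b) (hθ : a < θ) :
    max (Real.sqrt (θ / b) - 1) 0 < max (Real.sqrt (θ / a) - 1) 0 := by
  have hθ0 : 0 < θ := ha.trans hθ
  have hb : 0 < b := ha.trans hab
  have h1 : 1 < Real.sqrt (θ / a) := by
    rw [show (1:ℝ) = Real.sqrt 1 by simp]
    apply Real.sqrt_lt_sqrt (by norm_num)
    rw [lt_div_iff₀ ha]; linarith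
  have h2 : Real.sqrt (θ / b) < Real.sqrt (θ / a) := by
    apply Real.sqrt_lt_sqrt (by positivity)
    gcongr
  rw [max_eq_left (by linarith : (0:ℝ) ≤ Real.sqrt (θ / a) - 1)]
  apply max_lt <;> linarith

theorem cp_algorithm_correct (I : ℕ) (hI : 1 ≤ I) (θ N : ℕ → ℝ)
    (hθpos : ∀ i < I, 0 < θ i)
    (hθanti : ∀ i j, i < j → j < I → θ j < θ i)
    (hN : ∀ i < I, 0 < N i)
    (S : ℝ) (hS : 0 < S)
    (k : ℕ) (hk1 : 1 ≤ k) (hkI : k ≤ I)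
    (lamk : ℝ)
    (hlamk : lamk = ((∑ i ∈ Finset.range k, N i * Real.sqrt (θ i)) /
        (S + ∑ i ∈ Finset.range k, N i)) ^ 2)
    (hth : θ (k - 1) > lamk)
    (hth' : k = I ∨ θ k ≤ lamk) :
    (∑ i ∈ Finset.range I, N i * max (Real.sqrt (θ i / lamk) - 1) 0 = S) ∧
    (∀ lam' : ℝ, 0 < lam' →
      (∑ i ∈ Finset.range I, N i * max (Real.sqrt (θ i / lam') - 1) 0 = S) →
      lam' = lamk) ∧
    ((Finset.range I).filter (fun i => lamk < θ i)).card = k := by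
  set A := ∑ i ∈ Finset.range k, N i * Real.sqrt (θ i) with hA
  set M := ∑ i ∈ Finset.range k, N i with hM
  have hlt : ∀ i < k, lamk < θ i := by
    intro i hi
    have hik : i ≤ k - 1 := by omega
    rcases hik.lt_or_eq with h | h
    · exact hth.trans (hθanti i (k-1) h (by omega))
    · rw [h]; exact hth
  have hθ0 : lamk < θ 0 := hlt 0 (by omega)
  have hge : ∀ i, k ≤ i → i < I → θ i ≤ lamk := by
    intro i hki hiI
    have hkI' : k < I := lt_of_le_of_lt hki hiI
    rcases hth' with h | h
    · omega
    · rcases hki.lt_or_eq with h2 | h2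
      · exact (hθanti k i h2 hiI).le.trans h
      · rw [← h2]; exact h
  have hApos : 0 < A := by
    apply Finset.sum_pos
    · intro i hi
      have hi' : i < I := lt_of_lt_of_le (Finset.mem_range.mp hi) hkI
      have h1 := hN i hi'
      have h2 := hθpos i hi'
      positivity
    · exact ⟨0, Finset.mem_range.mpr hk1⟩
  have hMpos : 0 < M := by
    apply Finset.sum_pos
    · intro i hi
      exact hN i (lt_of_lt_of_le (Finset.mem_range.mp hi) hkI)
    · exact ⟨0, Finset.mem_range.mpr hk1⟩
  have hBpos : 0 < S + M := by linarith
  have hlampos : 0 < lamk := by rw [hlamk]; positivity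
  have hsqrt : Real.sqrt lamk = A / (S + M) := by
    rw [hlamk, Real.sqrt_sq (by positivity)]
  have hsum : ∑ i ∈ Finset.range I, N i * max (Real.sqrt (θ i / lamk) - 1) 0 = S := by
    rw [← Finset.sum_range_add_sum_Ico _ hkI]
    have h0 : ∑ i ∈ Finset.Ico k I, N i * max (Real.sqrt (θ i / lamk) - 1) 0 = 0 := by
      apply Finset.sum_eq_zero
      intro i hi
      obtain ⟨hki, hiI⟩ := Finset.mem_Ico.mp hi
      have hθi := hge i hki hiI
      have : Real.sqrt (θ i / lamk) ≤ 1 := by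
        rw [show (1:ℝ) = Real.sqrt 1 by simp]
        apply Real.sqrt_le_sqrt
        rw [div_le_one hlampos]; linarith
      rw [max_eq_right (by linarith)]
      ring
    have h1 : ∀ i ∈ Finset.range k, N i * max (Real.sqrt (θ i / lamk) - 1) 0
        = N i * Real.sqrt (θ i) * ((S + M) / A) - N i := by
      intro i hi
      have hik := Finset.mem_range.mp hi
      have hi' : i < I := lt_of_lt_of_le hik hkI
      have hθi := hlt i hik
      have hθpi := hθpos i hi'
      have hsq : Real.sqrt (θ i / lamk) = Real.sqrt (θ i) * ((S + M) / A) := by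
        rw [Real.sqrt_div hθpi.le, hsqrt, div_div_eq_mul_div, mul_div_assoc]
      have hone : 1 ≤ Real.sqrt (θ i / lamk) := by
        rw [show (1:ℝ) = Real.sqrt 1 by simp]
        apply Real.sqrt_le_sqrt
        rw [le_div_iff₀ hlampos]; linarith
      rw [max_eq_left (by linarith), hsq]
      ring
    rw [h0, Finset.sum_congr rfl h1, Finset.sum_sub_distrib, ← Finset.sum_mul, ← hA, ← hM]
    field_simp
    ring
  refine ⟨hsum, ?_, ?_⟩
  · intro lam' hl' hsum'
    by_contra hne
    rcases lt_or_gt_of_ne hne with h | h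
    · have hstep : ∑ i ∈ Finset.range I, N i * max (Real.sqrt (θ i / lamk) - 1) 0
          < ∑ i ∈ Finset.range I, N i * max (Real.sqrt (θ i / lam') - 1) 0 := by
        apply Finset.sum_lt_sum
        · intro i hi
          have hi' := Finset.mem_range.mp hi
          exact mul_le_mul_of_nonneg_left (cp_term_mono (hθpos i hi') hl' h.le) (hN i hi').le
        · exact ⟨0, Finset.mem_range.mpr (by omega),
            mul_lt_mul_of_pos_left (cp_term_strict hl' h (h.trans hθ0)) (hN 0 (by omega))⟩
      rw [hsum, hsum'] at hstep
      exact lt_irrefl _ hstep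
    · have hstep : ∑ i ∈ Finset.range I, N i * max (Real.sqrt (θ i / lam') - 1) 0
          < ∑ i ∈ Finset.range I, N i * max (Real.sqrt (θ i / lamk) - 1) 0 := by
        apply Finset.sum_lt_sum
        · intro i hi
          have hi' := Finset.mem_range.mp hi
          exact mul_le_mul_of_nonneg_left (cp_term_mono (hθpos i hi') hlampos h.le) (hN i hi').le
        · exact ⟨0, Finset.mem_range.mpr (by omega),
            mul_lt_mul_of_pos_left (cp_term_strict hlampos h hθ0) (hN 0 (by omega))⟩
      rw [hsum, hsum'] at hstep
      exact lt_irrefl _ hstep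
  · have hfilter : (Finset.range I).filter (fun i => lamk < θ i) = Finset.range k := by
      ext i
      simp only [Finset.mem_filter, Finset.mem_range]
      constructor
      · rintro ⟨hiI, hlti⟩
        by_contra hc
        exact absurd hlti (not_lt.mpr (hge i (by omega) hiI))
      · intro hik
        exact ⟨lt_of_lt_of_le hik hkI, hlt i hik⟩
    rw [hfilter, Finset.card_range]
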